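/- Corollary 2, Laplace baseline: Consider the linear regression model y_j = x_jᵀβ + ε_j, j = 1,…,n, with ε_j i.i.d. two-piece distributed with location 0, scale σ, baseline density the standard Laplace f(z) = (1/2) exp(−|z|), and parameterisation functions a(γ), b(γ), under the prior π(β,σ,γ) ∝ σ^{−q} π(γ) with q ≥ 0. If y does not lie in the column space of X, n > p + 1 − q, and condition (iii) holds (∫_Γ max(a(γ),b(γ))^{n+q−1}/(a(γ)+b(γ))^n π(γ) dγ < ∞), then the posterior is proper: ∫_Γ ∫_0^∞ ∫_{ℝ^p} ∏_{j=1}^n g(y_j − x_jᵀβ | σ, a(γ), b(γ); f) · σ^{−q} π(γ) dβ dσ dγ < ∞. -/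

import Mathlib

open MeasureTheory Real Set

/-- Two-piece density with location 0, scale `σ`, baseline density `f`,
and parameterisation values `a`, `b`. -/
noncomputable def twoPiece (f : ℝ → ℝ) (σ a b : ℝ) (z : ℝ) : ℝ :=
  if z < 0 then 2 / (σ * (a + b)) * f (z / (σ * b))
  else 2 / (σ * (a + b)) * f (z / (σ * a))

/-- The standard Laplace density `f(z) = (1/2) exp(-|z|)`. -/
noncomputable def baseline (z : ℝ) : ℝ := 1 / 2 * Real.exp (-|z|)

lemma twoPiece_nonneg {σ a b : ℝ} (hσ : 0 < σ) (ha : 0 < a) (hb : 0 < b) (z : ℝ) :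
    0 ≤ twoPiece baseline σ a b z := by
  unfold twoPiece baseline
  split_ifs <;> positivity

lemma twoPiece_le {σ a b : ℝ} (hσ : 0 < σ) (ha : 0 < a) (hb : 0 < b) (z : ℝ) :
    twoPiece baseline σ a b z ≤ (σ * (a + b))⁻¹ * Real.exp (-(|z| / (σ * max a b))) := by
  have hm : 0 < max a b := lt_max_of_lt_left ha
  have key : ∀ c : ℝ, 0 < c → c ≤ max a b →
      2 / (σ * (a + b)) * baseline (z / (σ * c)) ≤
        (σ * (a + b))⁻¹ * Real.exp (-(|z| / (σ * max a b))) := by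
    intro c hc hcm
    have h1 : |z / (σ * c)| = |z| / (σ * c) := by
      rw [abs_div, abs_of_pos (show (0:ℝ) < σ * c by positivity)]
    have h2 : |z| / (σ * (max a b)) ≤ |z| / (σ * c) :=
      div_le_div_of_nonneg_left (abs_nonneg z) (by positivity) (by nlinarith)
    have h3 : Real.exp (-(|z| / (σ * c))) ≤ Real.exp (-(|z| / (σ * max a b))) := by
      apply Real.exp_le_exp.2; linarith
    unfold baseline
    rw [h1]
    calc 2 / (σ * (a + b)) * (1 / 2 * Real.exp (-(|z| / (σ * c))))
        = (σ * (a + b))⁻¹ * Real.exp (-(|z| / (σ * c))) := by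
          rw [div_mul_eq_mul_div, ← mul_assoc]
          norm_num
          rw [div_eq_inv_mul, mul_comm, mul_inv]
          ring
      _ ≤ (σ * (a + b))⁻¹ * Real.exp (-(|z| / (σ * max a b))) := by
          apply mul_le_mul_of_nonneg_left h3 (by positivity)
  unfold twoPiece
  split_ifs
  · exact key b hb (le_max_right a b)
  · exact key a ha (le_max_left a b)


lemma arith_key {S B C Y d0 P W : ℝ} (hC : 0 < C) (hd0 : 0 < d0) (hY : 0 ≤ Y) (hP : 0 < P)
    (hB : 0 ≤ B) (h1 : d0 ≤ S) (h2 : B / C - Y ≤ S) (hW : W ≤ P * B) (hW0 : 0 ≤ W) :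
    d0 / 2 + d0 / (2 * C * (Y + d0) * P) * W ≤ S := by
  have hlamnonneg : (0:ℝ) ≤ d0 / (2 * C * (Y + d0) * P) := by positivity
  have h4 : d0 / (2 * C * (Y + d0) * P) * W ≤ d0 * B / (2 * C * (Y + d0)) := by
    calc d0 / (2 * C * (Y + d0) * P) * W
        ≤ d0 / (2 * C * (Y + d0) * P) * (P * B) := mul_le_mul_of_nonneg_left hW hlamnonneg
      _ = d0 * B / (2 * C * (Y + d0)) := by
          field_simp
  have h5 : d0 / 2 + d0 * B / (2 * C * (Y + d0)) ≤ S := by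
    rw [div_add_div _ _ (by norm_num) (by positivity), div_le_iff₀ (by positivity)]
    have e3 : (S + Y - B / C) * d0 ≥ 0 := by nlinarith
    have e4 : B / C * C = B := by field_simp
    nlinarith [e3, mul_pos hC hd0, mul_nonneg (sub_nonneg.2 h1) hY, mul_nonneg (sub_nonneg.2 h1) hd0.le]
  linarith


lemma lower_bound (n p : ℕ) (X : Matrix (Fin n) (Fin p) ℝ) (hX : X.rank = p)
    (y : Fin n → ℝ) (hy : y ∉ Set.range X.mulVec) :
    ∃ d > (0:ℝ), ∃ lam > (0:ℝ), ∀ β : Fin p → ℝ,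
      d + lam * ∑ i, |β i| ≤ ∑ j, |y j - X.mulVec β j| := by
  classical
  set T := X.mulVecLin with hT
  have hinj : Function.Injective T := by
    rw [← LinearMap.ker_eq_bot]
    have h1 := LinearMap.finrank_range_add_finrank_ker T
    have h2 : Module.finrank ℝ (LinearMap.range T) = p := hX
    rw [h2, Module.finrank_fintype_fun_eq_card, Fintype.card_fin] at h1
    have h3 : Module.finrank ℝ (LinearMap.ker T) = 0 := by omega
    exact Submodule.finrank_eq_zero.mp h3
  -- the range is a closed set
  have hclosed : IsClosed ((LinearMap.range T : Submodule ℝ (Fin n → ℝ)) : Set (Fin n → ℝ)) :=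
    Submodule.closed_of_finiteDimensional _
  have hne : ((LinearMap.range T : Submodule ℝ (Fin n → ℝ)) : Set (Fin n → ℝ)).Nonempty :=
    ⟨0, Submodule.zero_mem _⟩
  have hynot : y ∉ ((LinearMap.range T : Submodule ℝ (Fin n → ℝ)) : Set (Fin n → ℝ)) := by
    intro ⟨β, hβ⟩
    exact hy ⟨β, hβ⟩
  have hd0 : 0 < Metric.infDist y ((LinearMap.range T : Submodule ℝ (Fin n → ℝ)) : Set (Fin n → ℝ)) :=
    (hclosed.notMem_iff_infDist_pos hne).mp hynot
  set d0 := Metric.infDist y ((LinearMap.range T : Submodule ℝ (Fin n → ℝ)) : Set (Fin n → ℝ)) with hd0def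
  -- antilipschitz constant
  set e : (Fin p → ℝ) ≃ₗ[ℝ] LinearMap.range T := LinearEquiv.ofInjective T hinj with he
  set L := LinearMap.toContinuousLinearMap e.symm.toLinearMap with hL
  set C : ℝ := ‖L‖ + 1 with hC
  have hCpos : 0 < C := by positivity
  have hkey : ∀ β : Fin p → ℝ, ‖β‖ ≤ C * ‖T β‖ := by
    intro β
    have h0 : β = L (e β) := by simp [hL, he]
    have h1 : ‖(e β : Fin n → ℝ)‖ = ‖T β‖ := by
      simp [he]
    calc ‖β‖ = ‖L (e β)‖ := by rw [← h0]
      _ ≤ ‖L‖ * ‖e β‖ := L.le_opNorm _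
      _ = ‖L‖ * ‖T β‖ := by
          rw [show ‖e β‖ = ‖(e β : Fin n → ℝ)‖ from rfl, h1]
      _ ≤ C * ‖T β‖ := by
          apply mul_le_mul_of_nonneg_right (by simp [hC]) (norm_nonneg _)
  -- sum bounds
  have hnormsum : ∀ v : Fin n → ℝ, ‖v‖ ≤ ∑ j, |v j| := by
    intro v
    refine (pi_norm_le_iff_of_nonneg (Finset.sum_nonneg fun j _ => abs_nonneg _)).mpr ?_
    intro i
    rw [Real.norm_eq_abs]
    exact Finset.single_le_sum (fun j _ => abs_nonneg (v j)) (Finset.mem_univ i)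
  have hd0le : ∀ β : Fin p → ℝ, d0 ≤ ∑ j, |y j - X.mulVec β j| := by
    intro β
    calc d0 ≤ dist y (T β) := Metric.infDist_le_dist_of_mem (LinearMap.mem_range_self T β)
      _ = ‖y - T β‖ := dist_eq_norm _ _
      _ ≤ ∑ j, |(y - T β) j| := hnormsum _
      _ = ∑ j, |y j - X.mulVec β j| := by
          apply Finset.sum_congr rfl; intro j _; simp [hT, Matrix.mulVecLin_apply]
  set Y : ℝ := ‖y‖ with hY
  have hYnonneg : 0 ≤ Y := norm_nonneg _
  have hlin : ∀ β : Fin p → ℝ, ‖β‖ / C - Y ≤ ∑ j, |y j - X.mulVec β j| := by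
    intro β
    have h1 : ‖T β‖ - Y ≤ ‖y - T β‖ := by
      have := norm_sub_norm_le (T β) y
      rw [norm_sub_rev] at this
      exact this
    have h2 : ‖β‖ / C ≤ ‖T β‖ := by
      rw [div_le_iff₀ hCpos]
      linarith [hkey β, mul_comm C ‖T β‖]
    calc ‖β‖ / C - Y ≤ ‖T β‖ - Y := by linarith
      _ ≤ ‖y - T β‖ := h1
      _ ≤ ∑ j, |(y - T β) j| := hnormsum _
      _ = ∑ j, |y j - X.mulVec β j| := by
          apply Finset.sum_congr rfl; intro j _; simp [hT, Matrix.mulVecLin_apply]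
  have hsumnorm : ∀ β : Fin p → ℝ, ∑ i, |β i| ≤ (p + 1) * ‖β‖ := by
    intro β
    calc ∑ i, |β i| ≤ ∑ _i : Fin p, ‖β‖ := by
          apply Finset.sum_le_sum
          intro i _
          have := norm_le_pi_norm β i
          rwa [Real.norm_eq_abs] at this
      _ = p * ‖β‖ := by simp [Finset.sum_const, mul_comm]
      _ ≤ (p + 1) * ‖β‖ :=
          mul_le_mul_of_nonneg_right (le_add_of_nonneg_right zero_le_one) (norm_nonneg β)
  -- choose constants
  clear_value d0 C Y
  refine ⟨d0 / 2, by linarith, d0 / (2 * C * (Y + d0) * (p + 1)), by positivity, ?_⟩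
  intro β
  exact arith_key hCpos hd0 hYnonneg (by positivity) (norm_nonneg β) (hd0le β) (hlin β)
    (hsumnorm β) (Finset.sum_nonneg fun i _ => abs_nonneg _)


lemma exp_abs_integrable {k : ℝ} (hk : 0 < k) :
    Integrable (fun t : ℝ => Real.exp (-(k * |t|))) := by
  have hdom : Integrable (fun t : ℝ => 2 * ((1 + (k * t) ^ 2)⁻¹)) := by
    have h1 : Integrable (fun t : ℝ => (fun u : ℝ => (1 + u ^ 2)⁻¹) (k * t)) :=
      (integrable_comp_mul_left_iff (fun u : ℝ => (1 + u ^ 2)⁻¹) hk.ne').2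
        integrable_inv_one_add_sq
    exact h1.const_mul 2
  refine hdom.mono' ?_ (ae_of_all _ ?_)
  · exact (Real.continuous_exp.comp ((continuous_const.mul continuous_abs).neg)).aestronglyMeasurable
  · intro t
    rw [Real.norm_eq_abs, abs_of_pos (Real.exp_pos _)]
    have hx : 0 ≤ k * |t| := by positivity
    have hq := Real.quadratic_le_exp_of_nonneg hx
    have hsq : (k * t) ^ 2 = (k * |t|) ^ 2 := by
      rw [mul_pow, mul_pow, sq_abs]
    have h2 : 1 + (k * t) ^ 2 ≤ 2 * Real.exp (k * |t|) := by
      rw [hsq]; nlinarith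
    have hepos := Real.exp_pos (k * |t|)
    rw [Real.exp_neg]
    have hB : (0:ℝ) < 1 + (k * t) ^ 2 := by positivity
    rw [show (2:ℝ) * (1 + (k * t) ^ 2)⁻¹ = 2 / (1 + (k * t) ^ 2) by ring,
      inv_eq_one_div, div_le_div_iff₀ hepos hB]
    linarith

lemma exp_abs_integral {k : ℝ} (hk : 0 < k) :
    ∫ t : ℝ, Real.exp (-(k * |t|)) = k⁻¹ * ∫ t : ℝ, Real.exp (-|t|) := by
  have h : (fun t : ℝ => Real.exp (-(k * |t|))) =
      fun t : ℝ => (fun u : ℝ => Real.exp (-|u|)) (k * t) := by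
    funext t
    simp only []
    rw [abs_mul, abs_of_pos hk]
  rw [h, MeasureTheory.Measure.integral_comp_mul_left (fun u : ℝ => Real.exp (-|u|)) k, smul_eq_mul,
    abs_of_pos (inv_pos.2 hk)]

lemma pi_exp_lintegral (p : ℕ) {k : ℝ} (hk : 0 < k) :
    ∫⁻ β : Fin p → ℝ, ENNReal.ofReal (∏ i, Real.exp (-(k * |β i|)))
      = ENNReal.ofReal ((k⁻¹ * ∫ t : ℝ, Real.exp (-|t|)) ^ p) := by
  have hint := exp_abs_integrable hk
  have hprod : Integrable (fun β : Fin p → ℝ => ∏ i, Real.exp (-(k * |β i|))) :=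
    Integrable.fintype_prod (f := fun _ t => Real.exp (-(k * |t|))) (fun _ => hint)
  rw [← ofReal_integral_eq_lintegral_ofReal hprod (ae_of_all _ fun β =>
    Finset.prod_nonneg fun i _ => (Real.exp_pos _).le)]
  congr 1
  rw [volume_pi, MeasureTheory.integral_fintype_prod_eq_pow (ι := Fin p) (fun t : ℝ => Real.exp (-(k * |t|)))]
  rw [exp_abs_integral hk, Fintype.card_fin]


lemma exp_inv_le (N : ℕ) {u : ℝ} (hu : 0 < u) :
    Real.exp (-(1 / u)) ≤ N.factorial * u ^ N := by
  have hx : 0 < 1 / u := by positivity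
  have hsum := Real.sum_le_exp_of_nonneg hx.le (N + 1)
  have hterm : (1 / u) ^ N / N.factorial ≤ Real.exp (1 / u) := by
    refine le_trans ?_ hsum
    exact Finset.single_le_sum (f := fun i => (1 / u) ^ i / (i.factorial : ℝ))
      (fun i _ => by positivity) (Finset.self_mem_range_succ N)
  have hNf : (0:ℝ) < N.factorial := by positivity
  have hpow : (0:ℝ) < (1 / u) ^ N := by positivity
  rw [Real.exp_neg]
  rw [inv_le_comm₀ (Real.exp_pos _) (by positivity)]
  calc (↑N.factorial * u ^ N)⁻¹ = (1 / u) ^ N / N.factorial := by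
        rw [div_pow, one_pow]
        field_simp
    _ ≤ Real.exp (1 / u) := hterm

lemma sigma_int (r : ℝ) (hr : r < -1) (N : ℕ) (hrN : 0 ≤ r + N) :
    ∃ C : ℝ, 0 ≤ C ∧ ∀ A : ℝ, 0 < A →
      ∫⁻ σ in Set.Ioi (0:ℝ), ENNReal.ofReal (σ ^ r * Real.exp (-(A / σ)))
        = ENNReal.ofReal (A ^ (r + 1) * C) := by
  classical
  set h : ℝ → ℝ := fun u => u ^ r * Real.exp (-(1 / u)) with hh
  have hmeas : AEStronglyMeasurable h (volume.restrict (Ioi (0:ℝ))) := by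
    apply Measurable.aestronglyMeasurable
    fun_prop
  have hInt : IntegrableOn h (Ioi 0) := by
    have hunion : Ioc (0:ℝ) 1 ∪ Ioi 1 = Ioi 0 := Ioc_union_Ioi_eq_Ioi zero_le_one
    rw [← hunion]
    apply IntegrableOn.union
    · -- on Ioc 0 1, bounded by N!
      refine Integrable.mono' (g := fun _ => (N.factorial : ℝ))
        (integrableOn_const measure_Ioc_lt_top.ne)
        (hmeas.mono_measure (Measure.restrict_mono (Ioc_subset_Ioi_self.trans
          (by intro x hx; exact hx)) le_rfl)) ?_
      filter_upwards [ae_restrict_mem measurableSet_Ioc] with u hu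
      obtain ⟨hu0, hu1⟩ := hu
      have h1 : Real.exp (-(1 / u)) ≤ N.factorial * u ^ N := exp_inv_le N hu0
      have h2 : 0 ≤ h u := by
        simp only [hh]
        positivity
      rw [Real.norm_eq_abs, abs_of_nonneg h2]
      calc u ^ r * Real.exp (-(1 / u)) ≤ u ^ r * (N.factorial * u ^ N) := by
            apply mul_le_mul_of_nonneg_left h1 (Real.rpow_nonneg hu0.le r)
        _ = N.factorial * u ^ (r + N) := by
            rw [Real.rpow_add hu0, Real.rpow_natCast]
            ring
        _ ≤ N.factorial * 1 := by
            apply mul_le_mul_of_nonneg_left _ (by positivity)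
            exact Real.rpow_le_one hu0.le hu1 hrN
        _ = N.factorial := mul_one _
    · -- on Ioi 1, bounded by u ^ r
      refine Integrable.mono' (integrableOn_Ioi_rpow_of_lt hr zero_lt_one)
        (hmeas.mono_measure (Measure.restrict_mono (by intro x hx; exact lt_trans zero_lt_one (show (1:ℝ) < x from hx)) le_rfl)) ?_
      filter_upwards [ae_restrict_mem measurableSet_Ioi] with u hu
      have hu0 : (0:ℝ) < u := lt_trans zero_lt_one hu
      have h2 : 0 ≤ h u := by simp only [hh]; positivity
      rw [Real.norm_eq_abs, abs_of_nonneg h2]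
      calc u ^ r * Real.exp (-(1 / u)) ≤ u ^ r * 1 := by
            apply mul_le_mul_of_nonneg_left _ (Real.rpow_nonneg hu0.le r)
            exact Real.exp_le_one_iff.2 (neg_nonpos.2 (by positivity))
        _ = u ^ r := mul_one _
  refine ⟨∫ u in Ioi (0:ℝ), h u, setIntegral_nonneg measurableSet_Ioi
    (fun u hu => by have : (0:ℝ) < u := hu; simp only [hh]; positivity), ?_⟩
  intro A hA
  set f : ℝ → ℝ := fun σ => σ ^ r * Real.exp (-(A / σ)) with hf
  have hcomp : ∀ u ∈ Ioi (0:ℝ), f (A * u) = A ^ r * h u := by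
    intro u hu
    have hu0 : (0:ℝ) < u := hu
    simp only [hf, hh]
    rw [Real.mul_rpow hA.le hu0.le]
    have : A / (A * u) = 1 / u := by field_simp
    rw [this]
    ring
  have hIntf : IntegrableOn f (Ioi 0) := by
    have h1 : IntegrableOn (fun u => f (A * u)) (Ioi 0) := by
      apply (IntegrableOn.congr_fun ((hInt.const_mul (A ^ r))) ?_ measurableSet_Ioi)
      intro u hu
      exact (hcomp u hu).symm
    have := (integrableOn_Ioi_comp_mul_left_iff f 0 hA).1 h1
    rwa [mul_zero] at this
  have hval : ∫ σ in Ioi (0:ℝ), f σ = A ^ (r + 1) * ∫ u in Ioi (0:ℝ), h u := by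
    have h1 := integral_comp_mul_left_Ioi f 0 hA
    rw [mul_zero] at h1
    have h2 : ∫ u in Ioi (0:ℝ), f (A * u) = ∫ u in Ioi (0:ℝ), A ^ r * h u :=
      setIntegral_congr_fun measurableSet_Ioi hcomp
    rw [h2, smul_eq_mul] at h1
    have h3 : ∫ u in Ioi (0:ℝ), A ^ r * h u = A ^ r * ∫ u in Ioi (0:ℝ), h u :=
      integral_const_mul _ _
    rw [h3] at h1
    have hAne : A ≠ 0 := hA.ne'
    have : ∫ σ in Ioi (0:ℝ), f σ = A * (A ^ r * ∫ u in Ioi (0:ℝ), h u) := by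
      rw [h1]
      field_simp
    rw [this, Real.rpow_add_one hAne]
    ring
  rw [← ofReal_integral_eq_lintegral_ofReal hIntf ?_]
  · rw [hval]
  · filter_upwards [ae_restrict_mem measurableSet_Ioi] with σ hσ
    have : (0:ℝ) < σ := hσ
    simp only [hf]
    positivity


/-- Corollary 2 (laplace baseline): in the two-piece linear regression model with the
laplace baseline density and prior `π(β,σ,γ) ∝ σ^{-q} π(γ)`, if `y` is not in the column
space of `X`, `n > p + 1 - q`, and condition (iii) holds, then the posterior of
`(β, σ, γ)` is proper. -/
theorem posterior_proper_laplace
    (n p : ℕ) (q : ℝ) (hq : 0 ≤ q)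
    (X : Matrix (Fin n) (Fin p) ℝ) (hX : X.rank = p)
    (y : Fin n → ℝ)
    (Γ : Set ℝ) (hΓ : MeasurableSet Γ)
    -- parameterisation functions
    (a b : ℝ → ℝ) (ha_meas : Measurable a) (hb_meas : Measurable b)
    (ha_pos : ∀ γ ∈ Γ, 0 < a γ) (hb_pos : ∀ γ ∈ Γ, 0 < b γ)
    -- proper prior density on Γ
    (πγ : ℝ → ℝ) (hπγ_meas : Measurable πγ) (hπγ_nonneg : ∀ γ, 0 ≤ πγ γ)
    (hπγ_proper : ∫⁻ γ in Γ, ENNReal.ofReal (πγ γ) = 1)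
    -- y does not lie in the column space of X
    (hy : ¬ ∃ β : Fin p → ℝ, ∀ j, y j = ∑ i, X j i * β i)
    -- n > p + 1 - q
    (hnp : (p : ℝ) + 1 - q < n)
    -- condition (iii)
    (hiii : ∫⁻ γ in Γ, ENNReal.ofReal
        (max (a γ) (b γ) ^ ((n : ℝ) + q - 1) / (a γ + b γ) ^ n * πγ γ) < ⊤) :
    -- conclusion: the posterior of (β, σ, γ) is proper
    ∫⁻ γ in Γ, ∫⁻ σ in Set.Ioi (0 : ℝ), ∫⁻ β : Fin p → ℝ,
        ENNReal.ofReal ((∏ j, twoPiece baseline σ (a γ) (b γ) (y j - ∑ i, X j i * β i)) *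
          σ ^ (-q) * πγ γ) < ⊤ := by
  classical
  have hmv : ∀ (β : Fin p → ℝ) (j : Fin n), ∑ i, X j i * β i = X.mulVec β j := by
    intro β j
    simp [Matrix.mulVec, dotProduct]
  have hy' : y ∉ Set.range X.mulVec := by
    rintro ⟨β, rfl⟩
    exact hy ⟨β, fun j => (hmv β j).symm⟩
  obtain ⟨d, hd, lam, hlam, hS⟩ := lower_bound n p X hX y hy'
  set C0 : ℝ := ∫ t : ℝ, Real.exp (-|t|) with hC0
  have hC00 : 0 ≤ C0 := integral_nonneg fun t => (Real.exp_pos _).le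
  set r : ℝ := (p : ℝ) - n - q with hrdef
  have hr : r < -1 := by
    simp only [hrdef]; linarith
  obtain ⟨Cs, hCs0, hCs⟩ := sigma_int r hr (n + ⌈q⌉₊) (by
    have h1 := Nat.le_ceil q
    simp only [hrdef]
    push_cast
    linarith)
  set E : ℝ := (C0 / lam) ^ p * (d ^ (r + 1) * Cs) with hE
  have hE0 : 0 ≤ E := by
    have : (0:ℝ) ≤ d ^ (r + 1) := Real.rpow_nonneg hd.le _
    positivity
  have main : ∀ γ ∈ Γ, (∫⁻ σ in Set.Ioi (0:ℝ), ∫⁻ β : Fin p → ℝ,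
      ENNReal.ofReal ((∏ j, twoPiece baseline σ (a γ) (b γ) (y j - ∑ i, X j i * β i)) *
        σ ^ (-q) * πγ γ))
      ≤ ENNReal.ofReal E * ENNReal.ofReal
          (max (a γ) (b γ) ^ ((n : ℝ) + q - 1) / (a γ + b γ) ^ n * πγ γ) := by
    intro γ hγ
    have ha : 0 < a γ := ha_pos γ hγ
    have hb : 0 < b γ := hb_pos γ hγ
    set m : ℝ := max (a γ) (b γ) with hm
    have hmpos : 0 < m := lt_max_of_lt_left ha
    have hab : 0 < a γ + b γ := by linarith
    have hπ : 0 ≤ πγ γ := hπγ_nonneg γ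
    set A : ℝ := d / m with hA
    have hApos : 0 < A := div_pos hd hmpos
    set G : ℝ := ((a γ + b γ)⁻¹ ^ n * πγ γ) * ((m / lam * C0) ^ p) with hG
    have hG0 : 0 ≤ G := by positivity
    -- step 1: the β integral
    have step_beta : ∀ σ : ℝ, 0 < σ →
        (∫⁻ β : Fin p → ℝ, ENNReal.ofReal
          ((∏ j, twoPiece baseline σ (a γ) (b γ) (y j - ∑ i, X j i * β i)) *
            σ ^ (-q) * πγ γ))
        ≤ ENNReal.ofReal (((σ * (a γ + b γ))⁻¹ ^ n * Real.exp (-(d / (σ * m))) *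
            σ ^ (-q) * πγ γ) * ((lam / (σ * m))⁻¹ * C0) ^ p) := by
      intro σ hσ
      have hspos : 0 < σ * m := mul_pos hσ hmpos
      set k : ℝ := lam / (σ * m) with hk
      have hkpos : 0 < k := div_pos hlam hspos
      set K : ℝ := (σ * (a γ + b γ))⁻¹ ^ n * Real.exp (-(d / (σ * m))) * σ ^ (-q) * πγ γ
        with hK
      have hK0 : 0 ≤ K := by
        have h1 : (0:ℝ) ≤ σ ^ (-q) := Real.rpow_nonneg hσ.le _
        positivity
      have hpoint :
          ∀ β : Fin p → ℝ,
          (∏ j, twoPiece baseline σ (a γ) (b γ) (y j - ∑ i, X j i * β i)) *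
            σ ^ (-q) * πγ γ ≤ K * ∏ i, Real.exp (-(k * |β i|)) := by
        intro β
        have hP1 : (∏ j, twoPiece baseline σ (a γ) (b γ) (y j - ∑ i, X j i * β i))
            ≤ (σ * (a γ + b γ))⁻¹ ^ n *
              Real.exp (-((∑ j, |y j - X.mulVec β j|) / (σ * m))) := by
          calc (∏ j, twoPiece baseline σ (a γ) (b γ) (y j - ∑ i, X j i * β i))
              ≤ ∏ j, ((σ * (a γ + b γ))⁻¹ *
                  Real.exp (-(|y j - X.mulVec β j| / (σ * m)))) := by
                apply Finset.prod_le_prod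
                · intro j _
                  exact twoPiece_nonneg hσ ha hb _
                · intro j _
                  rw [hmv β j]
                  exact twoPiece_le hσ ha hb _
            _ = (σ * (a γ + b γ))⁻¹ ^ n *
                Real.exp (-((∑ j, |y j - X.mulVec β j|) / (σ * m))) := by
                rw [Finset.prod_mul_distrib, Finset.prod_const, Finset.card_univ,
                  Fintype.card_fin, ← Real.exp_sum]
                congr 1
                rw [Finset.sum_div, ← Finset.sum_neg_distrib]
        have hP2 : Real.exp (-((∑ j, |y j - X.mulVec β j|) / (σ * m)))
            ≤ Real.exp (-(d / (σ * m))) * ∏ i, Real.exp (-(k * |β i|)) := by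
          have h2 : Real.exp (-(d / (σ * m))) * ∏ i, Real.exp (-(k * |β i|))
              = Real.exp (-((d + lam * ∑ i, |β i|) / (σ * m))) := by
            rw [← Real.exp_sum, ← Real.exp_add]
            congr 1
            have h3 : ∑ i, -(k * |β i|) = -(k * ∑ i, |β i|) := by
              rw [Finset.sum_neg_distrib, ← Finset.mul_sum]
            rw [h3, hk]
            field_simp
            ring
          rw [h2]
          apply Real.exp_le_exp.2
          apply neg_le_neg
          gcongr
          exact hS β
        have hrq : (0:ℝ) ≤ σ ^ (-q) := Real.rpow_nonneg hσ.le _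
        have h4 : (∏ j, twoPiece baseline σ (a γ) (b γ) (y j - ∑ i, X j i * β i)) *
            σ ^ (-q) * πγ γ
            ≤ ((σ * (a γ + b γ))⁻¹ ^ n * (Real.exp (-(d / (σ * m))) *
              ∏ i, Real.exp (-(k * |β i|)))) * σ ^ (-q) * πγ γ := by
          apply mul_le_mul_of_nonneg_right _ hπ
          apply mul_le_mul_of_nonneg_right _ hrq
          calc (∏ j, twoPiece baseline σ (a γ) (b γ) (y j - ∑ i, X j i * β i))
              ≤ (σ * (a γ + b γ))⁻¹ ^ n *
                Real.exp (-((∑ j, |y j - X.mulVec β j|) / (σ * m))) := hP1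
            _ ≤ (σ * (a γ + b γ))⁻¹ ^ n * (Real.exp (-(d / (σ * m))) *
                ∏ i, Real.exp (-(k * |β i|))) :=
                mul_le_mul_of_nonneg_left hP2 (by positivity)
        calc (∏ j, twoPiece baseline σ (a γ) (b γ) (y j - ∑ i, X j i * β i)) *
            σ ^ (-q) * πγ γ
            ≤ ((σ * (a γ + b γ))⁻¹ ^ n * (Real.exp (-(d / (σ * m))) *
              ∏ i, Real.exp (-(k * |β i|)))) * σ ^ (-q) * πγ γ := h4
          _ = K * ∏ i, Real.exp (-(k * |β i|)) := by
              rw [hK]; ring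
      calc (∫⁻ β : Fin p → ℝ, ENNReal.ofReal
            ((∏ j, twoPiece baseline σ (a γ) (b γ) (y j - ∑ i, X j i * β i)) *
              σ ^ (-q) * πγ γ))
          ≤ ∫⁻ β : Fin p → ℝ, ENNReal.ofReal (K * ∏ i, Real.exp (-(k * |β i|))) :=
            lintegral_mono fun β => ENNReal.ofReal_le_ofReal (hpoint β)
        _ = ∫⁻ β : Fin p → ℝ, ENNReal.ofReal K *
              ENNReal.ofReal (∏ i, Real.exp (-(k * |β i|))) := by
            simp_rw [ENNReal.ofReal_mul hK0]
        _ = ENNReal.ofReal K * ∫⁻ β : Fin p → ℝ,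
              ENNReal.ofReal (∏ i, Real.exp (-(k * |β i|))) :=
            lintegral_const_mul' _ _ ENNReal.ofReal_ne_top
        _ = ENNReal.ofReal K * ENNReal.ofReal ((k⁻¹ * C0) ^ p) := by
            rw [pi_exp_lintegral p hkpos]
        _ = ENNReal.ofReal (K * (k⁻¹ * C0) ^ p) := (ENNReal.ofReal_mul hK0).symm
        _ = ENNReal.ofReal (((σ * (a γ + b γ))⁻¹ ^ n * Real.exp (-(d / (σ * m))) *
              σ ^ (-q) * πγ γ) * ((lam / (σ * m))⁻¹ * C0) ^ p) := by rw [hK, hk]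
    -- step 2: the σ integral
    have heq : ∀ σ : ℝ, σ ∈ Ioi (0:ℝ) →
        ((σ * (a γ + b γ))⁻¹ ^ n * Real.exp (-(d / (σ * m))) * σ ^ (-q) * πγ γ) *
          ((lam / (σ * m))⁻¹ * C0) ^ p
        = G * (σ ^ r * Real.exp (-(A / σ))) := by
      intro σ hσ
      have hσ0 : (0:ℝ) < σ := hσ
      have e1 : (σ:ℝ)⁻¹ ^ n = σ ^ (-(n:ℝ)) := by
        rw [Real.rpow_neg hσ0.le, Real.rpow_natCast, inv_pow]
      have e3 : (σ:ℝ) ^ (p:ℕ) = σ ^ ((p:ℕ):ℝ) := (Real.rpow_natCast σ p).symm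
      have e4 : d / (σ * m) = A / σ := by
        rw [hA, div_div, mul_comm m σ]
      have e5 : σ ^ (-(n:ℝ)) * σ ^ (-q) * σ ^ ((p:ℕ):ℝ) = σ ^ r := by
        rw [← Real.rpow_add hσ0, ← Real.rpow_add hσ0]
        congr 1
        rw [hrdef]; ring
      have e6 : (lam / (σ * m))⁻¹ = σ * (m / lam) := by
        field_simp
      calc ((σ * (a γ + b γ))⁻¹ ^ n * Real.exp (-(d / (σ * m))) * σ ^ (-q) * πγ γ) *
          ((lam / (σ * m))⁻¹ * C0) ^ p
          = ((a γ + b γ)⁻¹ ^ n * πγ γ * (m / lam * C0) ^ p) *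
            ((σ⁻¹ ^ n * σ ^ (-q) * σ ^ (p:ℕ)) * Real.exp (-(d / (σ * m)))) := by
            rw [e6, mul_inv, mul_pow]
            ring
        _ = G * (σ ^ r * Real.exp (-(A / σ))) := by
            rw [e1, e3, e5, e4, hG]
    calc (∫⁻ σ in Set.Ioi (0:ℝ), ∫⁻ β : Fin p → ℝ,
          ENNReal.ofReal ((∏ j, twoPiece baseline σ (a γ) (b γ)
            (y j - ∑ i, X j i * β i)) * σ ^ (-q) * πγ γ))
        ≤ ∫⁻ σ in Set.Ioi (0:ℝ), ENNReal.ofReal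
            (((σ * (a γ + b γ))⁻¹ ^ n * Real.exp (-(d / (σ * m))) *
              σ ^ (-q) * πγ γ) * ((lam / (σ * m))⁻¹ * C0) ^ p) := by
          apply lintegral_mono_ae
          filter_upwards [ae_restrict_mem measurableSet_Ioi] with σ hσ
          exact step_beta σ hσ
      _ = ∫⁻ σ in Set.Ioi (0:ℝ), ENNReal.ofReal G *
            ENNReal.ofReal (σ ^ r * Real.exp (-(A / σ))) := by
          apply lintegral_congr_ae
          filter_upwards [ae_restrict_mem measurableSet_Ioi] with σ hσ
          rw [heq σ hσ, ENNReal.ofReal_mul hG0]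
      _ = ENNReal.ofReal G * ∫⁻ σ in Set.Ioi (0:ℝ),
            ENNReal.ofReal (σ ^ r * Real.exp (-(A / σ))) :=
          lintegral_const_mul' _ _ ENNReal.ofReal_ne_top
      _ = ENNReal.ofReal G * ENNReal.ofReal (A ^ (r + 1) * Cs) := by
          rw [hCs A hApos]
      _ = ENNReal.ofReal (G * (A ^ (r + 1) * Cs)) := (ENNReal.ofReal_mul hG0).symm
      _ = ENNReal.ofReal E * ENNReal.ofReal
            (m ^ ((n : ℝ) + q - 1) / (a γ + b γ) ^ n * πγ γ) := by
          rw [← ENNReal.ofReal_mul hE0]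
          congr 1
          have f1 : A ^ (r + 1) = d ^ (r + 1) / m ^ (r + 1) := by
            rw [hA, Real.div_rpow hd.le hmpos.le]
          have f3 : m ^ (p:ℕ) = m ^ ((n:ℝ) + q - 1) * m ^ (r + 1) := by
            rw [← Real.rpow_natCast m p, ← Real.rpow_add hmpos]
            congr 1
            rw [hrdef]; ring
          have hmr : (0:ℝ) < m ^ (r + 1) := Real.rpow_pos_of_pos hmpos _
          have f2 : (m / lam * C0) ^ p = m ^ (p:ℕ) * (C0 / lam) ^ p := by
            rw [div_mul_eq_mul_div, div_pow, mul_pow, div_pow, mul_div_assoc]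
          rw [hG, hE, f1, f2, f3]
          field_simp
          have hne : (a γ + b γ) ^ n ≠ 0 := by positivity
          rw [one_div_pow]
          field_simp
  calc ∫⁻ γ in Γ, ∫⁻ σ in Set.Ioi (0 : ℝ), ∫⁻ β : Fin p → ℝ,
        ENNReal.ofReal ((∏ j, twoPiece baseline σ (a γ) (b γ) (y j - ∑ i, X j i * β i)) *
          σ ^ (-q) * πγ γ)
      ≤ ∫⁻ γ in Γ, ENNReal.ofReal E * ENNReal.ofReal
          (max (a γ) (b γ) ^ ((n : ℝ) + q - 1) / (a γ + b γ) ^ n * πγ γ) := by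
        apply lintegral_mono_ae
        filter_upwards [ae_restrict_mem hΓ] with γ hγ
        exact main γ hγ
    _ = ENNReal.ofReal E * ∫⁻ γ in Γ, ENNReal.ofReal
          (max (a γ) (b γ) ^ ((n : ℝ) + q - 1) / (a γ + b γ) ^ n * πγ γ) :=
        lintegral_const_mul' _ _ ENNReal.ofReal_ne_top
    _ < ⊤ := ENNReal.mul_lt_top ENNReal.ofReal_lt_top hiii
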